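/- Over an item alphabet with at least three distinct items a, b, c, for every embedding type τ ∈ {soft, strict} and every non-inclusion relation ⋫ ∈ {partial, total}, the weak containment relation does not dominate the strong containment relation: there exist an NSP p and a sequence s (namely p = ⟨a ¬b c⟩ with singleton itemsets, and s = ⟨a c b c⟩ the list of singleton itemsets {a}, {c}, {b}, {c}) such that p weakly occurs in s under (τ, ⋫) but p does not strongly occur in s under (τ, ⋫). -/

import Mathlib

namespace NSPpaper

/-- A sequence is a finite list of itemsets (finite sets of items). -/
abbrev Seq (ι : Type*) := List (Finset ι)

/-- `P` is partially non-included in `I`: `P` is empty or some element of `P` is not in `I`. -/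
def PartialNonIncl {ι : Type*} (P I : Finset ι) : Prop := P = ∅ ∨ ∃ e ∈ P, e ∉ I

/-- `P` is totally non-included in `I`: no element of `P` is in `I`. -/
def TotalNonIncl {ι : Type*} (P I : Finset ι) : Prop := ∀ e ∈ P, e ∉ I

/-- A negative sequential pattern `⟨p₁ ¬q₁ p₂ ¬q₂ … ¬q_{m-1} p_m⟩`:
nonempty positive itemsets `pos = [p₁, …, p_m]` and negative itemsets
`neg = [q₁, …, q_{m-1}]` (possibly empty itemsets). -/
structure NSP (ι : Type*) where
  pos : List (Finset ι)
  neg : List (Finset ι)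
  pos_ne : pos ≠ []
  pos_nonempty : ∀ P ∈ pos, P.Nonempty
  len : neg.length + 1 = pos.length

variable {ι : Type*}

/-- `e` is an embedding of the positive part `p⁺` of `p` in `s`:
strictly increasing positions with `p_i ⊆ s_{e_i}`. -/
def IsPosEmbedding (p : NSP ι) (s : Seq ι) (e : Fin p.pos.length → Fin s.length) : Prop :=
  StrictMono e ∧ ∀ i, p.pos.get i ⊆ s.get (e i)

/-- Soft embedding w.r.t. the non-inclusion relation `ni`:
an embedding of `p⁺` such that `q_i ⋫ s_j` for every `j` with `e_i < j < e_{i+1}`. -/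
def IsSoftEmbedding (ni : Finset ι → Finset ι → Prop) (p : NSP ι) (s : Seq ι)
    (e : Fin p.pos.length → Fin s.length) : Prop :=
  IsPosEmbedding p s e ∧
  ∀ i : Fin p.neg.length, ∀ j : Fin s.length,
    (e ⟨i.1, by have h1 := p.len; have h2 := i.2; omega⟩).1 < j.1 →
    j.1 < (e ⟨i.1 + 1, by have h1 := p.len; have h2 := i.2; omega⟩).1 →
    ni (p.neg.get i) (s.get j)

/-- Union `⋃_{a < j < b} s_j` of the itemsets of `s` strictly between positions `a` and `b`. -/
def segUnion [DecidableEq ι] (s : Seq ι) (a b : ℕ) : Finset ι :=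
  (Finset.Ioo a b).biUnion (fun j => s.getD j ∅)

/-- Strict embedding w.r.t. the non-inclusion relation `ni`:
an embedding of `p⁺` such that `q_i ⋫ ⋃_{e_i < j < e_{i+1}} s_j`. -/
def IsStrictEmbedding [DecidableEq ι] (ni : Finset ι → Finset ι → Prop) (p : NSP ι) (s : Seq ι)
    (e : Fin p.pos.length → Fin s.length) : Prop :=
  IsPosEmbedding p s e ∧
  ∀ i : Fin p.neg.length,
    ni (p.neg.get i)
      (segUnion s (e ⟨i.1, by have h1 := p.len; have h2 := i.2; omega⟩).1
                  (e ⟨i.1 + 1, by have h1 := p.len; have h2 := i.2; omega⟩).1)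

/-- Embedding type: soft or strict. -/
inductive EmbT | soft | strict

/-- `τ`-embedding (soft or strict) w.r.t. non-inclusion `ni`. -/
def IsEmb [DecidableEq ι] (τ : EmbT) (ni : Finset ι → Finset ι → Prop) (p : NSP ι) (s : Seq ι)
    (e : Fin p.pos.length → Fin s.length) : Prop :=
  match τ with
  | .soft => IsSoftEmbedding ni p s e
  | .strict => IsStrictEmbedding ni p s e

/-- `p` weakly occurs in `s` under `(τ, ni)`: some `τ`-embedding of `p` in `s` exists. -/
def WeakOcc [DecidableEq ι] (τ : EmbT) (ni : Finset ι → Finset ι → Prop)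
    (p : NSP ι) (s : Seq ι) : Prop :=
  ∃ e, IsEmb τ ni p s e

/-- `p` strongly occurs in `s` under `(τ, ni)`: some embedding of `p⁺` in `s` exists and
every embedding of `p⁺` in `s` is a `τ`-embedding of `p`. -/
def StrongOcc [DecidableEq ι] (τ : EmbT) (ni : Finset ι → Finset ι → Prop)
    (p : NSP ι) (s : Seq ι) : Prop :=
  (∃ e, IsPosEmbedding p s e) ∧ ∀ e, IsPosEmbedding p s e → IsEmb τ ni p s e

/-- Occurrence mode: weak or strong. -/
inductive OccMode | weak | strong

/-- `p` occurs in `s` under mode `μ`, embedding type `τ` and non-inclusion `ni`. -/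
def Occurs [DecidableEq ι] (μ : OccMode) (τ : EmbT) (ni : Finset ι → Finset ι → Prop)
    (p : NSP ι) (s : Seq ι) : Prop :=
  match μ with
  | .weak => WeakOcc τ ni p s
  | .strong => StrongOcc τ ni p s

/-- Dominance: `θ ⩾ θ'` iff `p θ s` implies `p θ' s` for every NSP `p` and sequence `s`. -/
def Dominates (θ θ' : NSP ι → Seq ι → Prop) : Prop :=
  ∀ (p : NSP ι) (s : Seq ι), θ p s → θ' p s

/-- The set Θ of the eight containment relations. -/
def Theta (ι : Type*) [DecidableEq ι] : Set (NSP ι → Seq ι → Prop) :=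
  { θ | ∃ (μ : OccMode) (τ : EmbT) (ni : Finset ι → Finset ι → Prop),
      (ni = PartialNonIncl ∨ ni = TotalNonIncl) ∧ θ = Occurs μ τ ni }

/-- `p ⊑ p'`. -/
def NspIncl [DecidableEq ι] (p p' : NSP ι) : Prop :=
  p.pos.length ≤ p'.pos.length ∧
  ∃ u : Fin p.pos.length → Fin p'.pos.length, StrictMono u ∧
    (∀ i, p.pos.get i ⊆ p'.pos.get (u i)) ∧
    (∀ i : Fin p.neg.length,
      p.neg.get i ⊆
        (Finset.Ico (u ⟨i.1, by have h1 := p.len; have h2 := i.2; omega⟩).1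
                    (u ⟨i.1 + 1, by have h1 := p.len; have h2 := i.2; omega⟩).1).biUnion
          (fun j => p'.neg.getD j ∅)) ∧
    (p.pos.length = p'.pos.length →
      (∃ j : Fin p.pos.length, p.pos.get j ≠ p'.pos.getD j.1 ∅) ∨
      (∃ j : Fin p.neg.length, p.neg.get j ≠ p'.neg.getD j.1 ∅))

/-- `p ◁ p'`. -/
def Lhd (p p' : NSP ι) : Prop :=
  p.pos.length ≤ p'.pos.length ∧
  (∀ i : Fin p.pos.length, p.pos.get i ⊆ p'.pos.getD i.1 ∅) ∧
  (∀ i : Fin p.neg.length, p.neg.get i ⊆ p'.neg.getD i.1 ∅) ∧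
  (p.pos.length = p'.pos.length →
    p.pos.getD (p.pos.length - 1) ∅ ≠ p'.pos.getD (p.pos.length - 1) ∅ ∨
    ∃ j : Fin p.neg.length, p.neg.get j ≠ p'.neg.getD j.1 ∅)

/-- `p ⊑⁺ p'`. -/
def NspInclPlus (p p' : NSP ι) : Prop :=
  p.pos.length = p'.pos.length ∧
  (∀ i : Fin p.pos.length, p.pos.get i = p'.pos.getD i.1 ∅) ∧
  (∀ i : Fin p.neg.length, p.neg.get i ⊆ p'.neg.getD i.1 ∅) ∧
  (∃ j : Fin p.neg.length, p.neg.get j ≠ p'.neg.getD j.1 ∅)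

/-- Support of `p` in the dataset `D` w.r.t. the containment relation `θ`:
the number of sequences of `D` in which `p` occurs according to `θ`. -/
noncomputable def supp (θ : NSP ι → Seq ι → Prop) (D : Finset (Seq ι)) (p : NSP ι) : ℕ :=
  letI := Classical.decPred (fun s : Seq ι => θ p s)
  (D.filter fun s => θ p s).card

/-- weak containment does not dominate strong containment:
with `p = ⟨a ¬b c⟩` and `s = ⟨a c b c⟩`, for every embedding type `τ` and every
non-inclusion relation, `p` weakly occurs in `s` but does not strongly occur in `s`. -/
theorem weak_not_dominates_strong {ι : Type*} [DecidableEq ι]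
    (a b c : ι) (hab : a ≠ b) (hac : a ≠ c) (hbc : b ≠ c) :
    ∃ (p : NSP ι) (s : Seq ι),
      p.pos = [{a}, {c}] ∧ p.neg = [{b}] ∧ s = [{a}, {c}, {b}, {c}] ∧
      ∀ (τ : EmbT) (ni : Finset ι → Finset ι → Prop),
        (ni = PartialNonIncl ∨ ni = TotalNonIncl) →
        WeakOcc τ ni p s ∧ ¬ StrongOcc τ ni p s := by
  classical
  refine ⟨⟨[{a}, {c}], [{b}], by simp, ?_, rfl⟩, [{a}, {c}, {b}, {c}], rfl, rfl, rfl, ?_⟩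
  · intro P hP
    simp only [List.mem_cons, List.mem_singleton, List.not_mem_nil, or_false] at hP
    rcases hP with h | h <;> subst h <;> exact ⟨_, Finset.mem_singleton_self _⟩
  intro τ ni hni
  set s : Seq ι := [{a}, {c}, {b}, {c}] with hs
  set p : NSP ι := ⟨[{a}, {c}], [{b}], by simp, _, rfl⟩ with hp
  have hlen : s.length = 4 := rfl
  have hniBempty : ni ({b} : Finset ι) ∅ := by
    rcases hni with h | h <;> subst h
    · exact Or.inr ⟨b, Finset.mem_singleton_self b, by simp⟩
    · intro e he; simp
  have hniBfail : ∀ I : Finset ι, b ∈ I → ¬ ni ({b} : Finset ι) I := by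
    intro I hbI hn
    rcases hni with h | h <;> subst h
    · rcases hn with h | ⟨e, he, hne⟩
      · simp at h
      · simp only [Finset.mem_singleton] at he; subst he; exact hne hbI
    · exact hn b (Finset.mem_singleton_self b) hbI
  constructor
  · -- weak occurrence via embedding (0, 1)
    refine ⟨![⟨0, by omega⟩, ⟨1, by omega⟩], ?_⟩
    have hpos : IsPosEmbedding p s ![⟨0, by omega⟩, ⟨1, by omega⟩] := by
      constructor
      · intro i j hij
        fin_cases i <;> fin_cases j <;> simp_all <;> omega
      · intro i; fin_cases i <;> exact Finset.Subset.refl _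
    cases τ with
    | soft =>
      refine ⟨hpos, ?_⟩
      intro i j h1 h2
      fin_cases i
      have h1' : (0:ℕ) < j.1 := h1
      have h2' : j.1 < 1 := h2
      omega
    | strict =>
      refine ⟨hpos, ?_⟩
      intro i
      fin_cases i
      have h01 : segUnion s 0 1 = ∅ := by
        simp [segUnion, show Finset.Ioo 0 1 = (∅ : Finset ℕ) by decide]
      simpa [h01, hlen, hp] using hniBempty
  · -- not strong: the pos-embedding (0, 3) is not a τ-embedding
    rintro ⟨-, hall⟩
    have hpose : IsPosEmbedding p s ![⟨0, by omega⟩, ⟨3, by omega⟩] := by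
      constructor
      · intro i j hij
        fin_cases i <;> fin_cases j <;> simp_all [Fin.lt_def]
      · intro i; fin_cases i <;> exact Finset.Subset.refl _
    have hemb := hall _ hpose
    cases τ with
    | soft =>
      obtain ⟨-, hneg⟩ := hemb
      have h := hneg ⟨0, Nat.one_pos⟩ ⟨2, by omega⟩
        (show (0:ℕ) < 2 by omega) (show (2:ℕ) < 3 by omega)
      exact hniBfail (s.get ⟨2, by omega⟩) (Finset.mem_singleton_self b) h
    | strict =>
      obtain ⟨-, hneg⟩ := hemb
      have h := hneg ⟨0, Nat.one_pos⟩
      have hbmem : b ∈ segUnion s 0 3 := by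
        simp only [segUnion, Finset.mem_biUnion, Finset.mem_Ioo]
        exact ⟨2, ⟨by omega, by omega⟩, Finset.mem_singleton_self b⟩
      exact hniBfail _ hbmem h

end NSPpaper
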